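/- For every t ∈ ℂ and every nonzero integral ideal 𝔫 = 𝔫₀𝔫₁² of 𝒪, the 𝒩-transform of the arithmetic function 𝔪 ↦ N(𝔪)^t satisfies 𝒩[N^t](𝔫) = N(𝔫)^t · ∏_{v ∈ S(𝔫₁)∖S₂(𝔫)} (1 − q_v^{−2(1+t)}) · ∏_{v ∈ S₂(𝔫)} (1 − (1 − q_v^{−1})^{−1} q_v^{−2(1+t)}). -/

import Mathlib

/- Statement 1 (Lemma `FIND`): for `t ∈ ℂ` and a nonzero integral ideal `𝔫 = 𝔫₀𝔫₁²`,
   `𝒩[N^t](𝔫) = N(𝔫)^t ∏_{v∈S(𝔫₁)∖S₂(𝔫)} (1 − q_v^{−2(1+t)})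
               ∏_{v∈S₂(𝔫)} (1 − (1−q_v^{−1})^{−1} q_v^{−2(1+t)})`. -/

open NumberField UniqueFactorizationMonoid
open scoped Classical

namespace Stmt1

variable (F : Type*) [Field F] [NumberField F]

/-- `S(𝔪)`: the set of prime ideals dividing `𝔪`. -/
noncomputable def S (𝔪 : Ideal (𝓞 F)) : Finset (Ideal (𝓞 F)) :=
  (normalizedFactors 𝔪).toFinset

/-- `ord_v(𝔪)`: the exponent of the prime `v` in `𝔪`. -/
noncomputable def ordv (v 𝔪 : Ideal (𝓞 F)) : ℕ :=
  (normalizedFactors 𝔪).count v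

/-- `S_k(𝔪) = {v ∈ S(𝔪) : ord_v(𝔪) = k}`. -/
noncomputable def Sk (k : ℕ) (𝔪 : Ideal (𝓞 F)) : Finset (Ideal (𝓞 F)) :=
  (S F 𝔪).filter fun v => ordv F v 𝔪 = k

/-- `q_v`: the cardinality of the residue field `𝒪/𝔭_v`, as a real number. -/
noncomputable def qv (v : Ideal (𝓞 F)) : ℝ := (Ideal.absNorm v : ℝ)

/-- `ω_v(𝔠) = 1` if `v ∈ S(𝔠)`, and `(q_v+1)/(q_v−1)` otherwise. -/
noncomputable def omegav (v 𝔠 : Ideal (𝓞 F)) : ℝ :=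
  if v ∈ S F 𝔠 then 1 else (qv F v + 1) / (qv F v - 1)

/-- The quotient ideal `𝔫𝔟⁻¹` when `𝔟 ∣ 𝔫` (junk value `0` otherwise). -/
noncomputable def idealDiv (𝔫 𝔟 : Ideal (𝓞 F)) : Ideal (𝓞 F) :=
  if h : ∃ 𝔠, 𝔫 = 𝔟 * 𝔠 then h.choose else 0

/-- `𝔫₁`: the unique ideal with `𝔫 = 𝔫₀𝔫₁²`, `𝔫₀` squarefree. -/
noncomputable def nOne (𝔫 : Ideal (𝓞 F)) : Ideal (𝓞 F) :=
  ∏ v ∈ S F 𝔫, v ^ (ordv F v 𝔫 / 2)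

/-- `𝔫₀`: the product of the primes occurring in `𝔫` with odd exponent. -/
noncomputable def nZero (𝔫 : Ideal (𝓞 F)) : Ideal (𝓞 F) :=
  ∏ v ∈ S F 𝔫, v ^ (ordv F v 𝔫 % 2)

/-- `ι(𝔪) = ∏_{v∈S(𝔪)} (1+q_v)·q_v^{ord_v(𝔪)−1}`. -/
noncomputable def iota (𝔪 : Ideal (𝓞 F)) : ℝ :=
  ∏ v ∈ S F 𝔪, (1 + qv F v) * qv F v ^ (ordv F v 𝔪 - 1)

/-- The `𝒩`-transform of an arithmetic function `B` (with complex values):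
`𝒩[B](𝔫) = Σ_{I ⊆ S(𝔫₁)} (−1)^{#I} (∏_{v∈I∩S₁(𝔫₁)} ω_v(𝔫₀))
            (ι(𝔫∏_{v∈I}𝔭_v⁻²)/ι(𝔫)) B(𝔫∏_{v∈I}𝔭_v⁻²)`. -/
noncomputable def Ntrans (B : Ideal (𝓞 F) → ℂ) (𝔫 : Ideal (𝓞 F)) : ℂ :=
  ∑ I ∈ (S F (nOne F 𝔫)).powerset,
    (-1 : ℂ) ^ I.card *
      (∏ v ∈ I ∩ Sk F 1 (nOne F 𝔫), (omegav F v (nZero F 𝔫) : ℂ)) *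
      ((iota F (idealDiv F 𝔫 (∏ v ∈ I, v ^ 2)) / iota F 𝔫 : ℝ) : ℂ) *
      B (idealDiv F 𝔫 (∏ v ∈ I, v ^ 2))

lemma mem_S {v 𝔪 : Ideal (𝓞 F)} : v ∈ S F 𝔪 ↔ ordv F v 𝔪 ≠ 0 := by
  simp [S, ordv, Multiset.count_ne_zero, UniqueFactorizationMonoid.mem_primeFactors]

lemma prime_of_mem_S {v 𝔪 : Ideal (𝓞 F)} (h : v ∈ S F 𝔪) : Prime v :=
  prime_of_normalized_factor v (Multiset.mem_toFinset.mp h)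

lemma nf_prod_pow (s : Finset (Ideal (𝓞 F))) (hs : ∀ v ∈ s, Prime v) (e : Ideal (𝓞 F) → ℕ) :
    normalizedFactors (∏ v ∈ s, v ^ e v) = ∑ v ∈ s, e v • ({v} : Multiset (Ideal (𝓞 F))) := by
  induction s using Finset.cons_induction with
  | empty => rw [Finset.prod_empty, Finset.sum_empty, normalizedFactors_one]
  | cons a s ha ih =>
    have hprod : (∏ v ∈ s, v ^ e v) ≠ 0 := by
      apply Finset.prod_ne_zero_iff.mpr
      intro v hv
      exact pow_ne_zero _ (hs v (Finset.mem_cons_of_mem hv)).ne_zero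
    have ha' : Prime a := hs a (Finset.mem_cons_self a s)
    rw [Finset.prod_cons, Finset.sum_cons,
      normalizedFactors_mul (pow_ne_zero _ ha'.ne_zero) hprod,
      normalizedFactors_pow, normalizedFactors_irreducible ha'.irreducible,
      ih (fun v hv => hs v (Finset.mem_cons_of_mem hv)), normalize_eq]

lemma ordv_prod_pow (s : Finset (Ideal (𝓞 F))) (hs : ∀ v ∈ s, Prime v) (e : Ideal (𝓞 F) → ℕ)
    (v : Ideal (𝓞 F)) :
    ordv F v (∏ w ∈ s, w ^ e w) = if v ∈ s then e v else 0 := by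
  rw [ordv, nf_prod_pow F s hs e, Multiset.count_sum']
  simp only [Multiset.count_nsmul, Multiset.count_singleton, mul_ite, mul_one, mul_zero]
  simp [Finset.sum_ite_eq]



lemma two_le_qv {v 𝔪 : Ideal (𝓞 F)} (h : v ∈ S F 𝔪) : 2 ≤ qv F v := by
  have hp := prime_of_mem_S F h
  have h0 : Ideal.absNorm v ≠ 0 := by
    simpa using Ideal.absNorm_eq_zero_iff.not.mpr hp.ne_zero
  have h1 : Ideal.absNorm v ≠ 1 := by
    intro hc
    exact hp.not_unit (by simpa [Ideal.absNorm_eq_one_iff, Ideal.one_eq_top] using hc)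
  have : 2 ≤ Ideal.absNorm v := by omega
  rw [qv]; exact_mod_cast this

lemma ordv_nOne (𝔫 v : Ideal (𝓞 F)) :
    ordv F v (nOne F 𝔫) = if v ∈ S F 𝔫 then ordv F v 𝔫 / 2 else 0 :=
  ordv_prod_pow F _ (fun _ h => prime_of_mem_S F h) _ v

lemma ordv_nZero (𝔫 v : Ideal (𝓞 F)) :
    ordv F v (nZero F 𝔫) = if v ∈ S F 𝔫 then ordv F v 𝔫 % 2 else 0 :=
  ordv_prod_pow F _ (fun _ h => prime_of_mem_S F h) _ v

lemma mem_S_nOne {𝔫 v : Ideal (𝓞 F)} :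
    v ∈ S F (nOne F 𝔫) ↔ v ∈ S F 𝔫 ∧ 2 ≤ ordv F v 𝔫 := by
  rw [mem_S, ordv_nOne]
  by_cases h : v ∈ S F 𝔫 <;> simp [h] <;> omega

lemma mem_S_nZero {𝔫 v : Ideal (𝓞 F)} :
    v ∈ S F (nZero F 𝔫) ↔ v ∈ S F 𝔫 ∧ ordv F v 𝔫 % 2 = 1 := by
  rw [mem_S, ordv_nZero]
  by_cases h : v ∈ S F 𝔫 <;> simp [h] <;> omega

lemma idealDiv_spec {𝔫 𝔟 : Ideal (𝓞 F)} (h : 𝔟 ∣ 𝔫) : 𝔫 = 𝔟 * idealDiv F 𝔫 𝔟 := by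
  obtain ⟨c, hc⟩ := h
  have hex : ∃ 𝔠, 𝔫 = 𝔟 * 𝔠 := ⟨c, hc⟩
  rw [idealDiv, dif_pos hex]
  exact hex.choose_spec


section Setup
variable {𝔫 : Ideal (𝓞 F)} {I : Finset (Ideal (𝓞 F))}

lemma S_nOne_subset : S F (nOne F 𝔫) ⊆ S F 𝔫 := fun v hv => ((mem_S_nOne F).mp hv).1

lemma primeI (hI : I ⊆ S F (nOne F 𝔫)) : ∀ v ∈ I, Prime v :=
  fun v hv => prime_of_mem_S F (hI hv)

lemma ordv_P (hI : I ⊆ S F (nOne F 𝔫)) (v : Ideal (𝓞 F)) :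
    ordv F v (∏ w ∈ I, w ^ 2) = if v ∈ I then 2 else 0 :=
  ordv_prod_pow F I (primeI F hI) (fun _ => 2) v

lemma P_ne_zero (hI : I ⊆ S F (nOne F 𝔫)) : (∏ w ∈ I, w ^ 2) ≠ 0 :=
  Finset.prod_ne_zero_iff.mpr fun v hv => pow_ne_zero _ (primeI F hI v hv).ne_zero

lemma P_dvd (h𝔫 : 𝔫 ≠ 0) (hI : I ⊆ S F (nOne F 𝔫)) : (∏ w ∈ I, w ^ 2) ∣ 𝔫 := by
  rw [dvd_iff_normalizedFactors_le_normalizedFactors (P_ne_zero F hI) h𝔫, Multiset.le_iff_count]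
  intro v
  have := ordv_P F hI v
  rw [ordv] at this
  rw [this]
  by_cases hv : v ∈ I
  · simpa [hv, ordv] using ((mem_S_nOne F).mp (hI hv)).2
  · simp [hv]

lemma ordv_eq_add (h𝔫 : 𝔫 ≠ 0) (hI : I ⊆ S F (nOne F 𝔫)) (v : Ideal (𝓞 F)) :
    ordv F v 𝔫 = (if v ∈ I then 2 else 0) +
      ordv F v (idealDiv F 𝔫 (∏ w ∈ I, w ^ 2)) := by
  have hspec := idealDiv_spec F (P_dvd F h𝔫 hI)
  have hQ0 : idealDiv F 𝔫 (∏ w ∈ I, w ^ 2) ≠ 0 := by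
    intro hc; rw [hc, mul_zero] at hspec; exact h𝔫 hspec
  conv_lhs => rw [ordv, hspec]
  rw [normalizedFactors_mul (P_ne_zero F hI) hQ0, Multiset.count_add]
  rw [← ordv, ← ordv, ordv_P F hI]

lemma Q_ne_zero (h𝔫 : 𝔫 ≠ 0) (hI : I ⊆ S F (nOne F 𝔫)) :
    idealDiv F 𝔫 (∏ w ∈ I, w ^ 2) ≠ 0 := by
  intro hc
  have hspec := idealDiv_spec F (P_dvd F h𝔫 hI)
  rw [hc, mul_zero] at hspec; exact h𝔫 hspec

lemma S_Q (h𝔫 : 𝔫 ≠ 0) (hI : I ⊆ S F (nOne F 𝔫)) :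
    S F (idealDiv F 𝔫 (∏ w ∈ I, w ^ 2)) =
      (S F 𝔫).filter (fun v => ordv F v (idealDiv F 𝔫 (∏ w ∈ I, w ^ 2)) ≠ 0) := by
  ext v
  rw [Finset.mem_filter, mem_S, mem_S]
  have := ordv_eq_add F h𝔫 hI v
  constructor
  · intro h; exact ⟨by omega, h⟩
  · exact fun h => h.2

end Setup
section Setup2
variable {𝔫 : Ideal (𝓞 F)} {I : Finset (Ideal (𝓞 F))}

lemma iota_ratio (h𝔫 : 𝔫 ≠ 0) (hI : I ⊆ S F (nOne F 𝔫)) :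
    iota F (idealDiv F 𝔫 (∏ w ∈ I, w ^ 2)) / iota F 𝔫 =
      ∏ v ∈ I, ((if ordv F v 𝔫 = 2 then 1
          else (1 + qv F v) * qv F v ^ (ordv F v 𝔫 - 3)) /
        ((1 + qv F v) * qv F v ^ (ordv F v 𝔫 - 1))) := by
  have hIS : I ⊆ S F 𝔫 := fun v hv => S_nOne_subset F (hI hv)
  have hqpos : ∀ v ∈ S F 𝔫, (0:ℝ) < qv F v := fun v hv => lt_of_lt_of_le (by norm_num) (two_le_qv F hv)
  have hden : ∀ v ∈ S F 𝔫, (1 + qv F v) * qv F v ^ (ordv F v 𝔫 - 1) ≠ 0 := by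
    intro v hv
    have := hqpos v hv
    positivity
  have h1 : iota F (idealDiv F 𝔫 (∏ w ∈ I, w ^ 2)) =
      ∏ v ∈ S F 𝔫, (if ordv F v (idealDiv F 𝔫 (∏ w ∈ I, w ^ 2)) ≠ 0 then
        (1 + qv F v) * qv F v ^ (ordv F v (idealDiv F 𝔫 (∏ w ∈ I, w ^ 2)) - 1) else 1) := by
    rw [iota, S_Q F h𝔫 hI, Finset.prod_filter]
  rw [h1, iota, ← Finset.prod_div_distrib]
  rw [← Finset.prod_subset hIS (by
    intro v hv hvI
    have hadd := ordv_eq_add F h𝔫 hI v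
    rw [if_neg hvI] at hadd
    have hQv : ordv F v (idealDiv F 𝔫 (∏ w ∈ I, w ^ 2)) = ordv F v 𝔫 := by omega
    rw [hQv, if_pos ((mem_S F).mp hv), div_self (hden v hv)])]
  apply Finset.prod_congr rfl
  intro v hv
  have hadd := ordv_eq_add F h𝔫 hI v
  rw [if_pos hv] at hadd
  have h2 : 2 ≤ ordv F v 𝔫 := ((mem_S_nOne F).mp (hI hv)).2
  have hQv : ordv F v (idealDiv F 𝔫 (∏ w ∈ I, w ^ 2)) = ordv F v 𝔫 - 2 := by omega
  rw [hQv]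
  by_cases h02 : ordv F v 𝔫 = 2
  · rw [if_neg (by omega), if_pos h02]
  · rw [if_pos (by omega), if_neg h02]
    congr 2

lemma cpow_prod_aux {ι : Type*} (s : Finset ι) (f : ι → ℝ) (hf : ∀ i ∈ s, 0 ≤ f i) (t : ℂ) :
    ((∏ i ∈ s, f i : ℝ) : ℂ) ^ t = ∏ i ∈ s, ((f i : ℝ) : ℂ) ^ t := by
  induction s using Finset.cons_induction with
  | empty => simp [Complex.one_cpow]
  | cons a s ha ih =>
    rw [Finset.prod_cons, Finset.prod_cons, Complex.ofReal_mul,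
      Complex.mul_cpow_ofReal_nonneg (hf a (Finset.mem_cons_self a s))
        (Finset.prod_nonneg fun i hi => hf i (Finset.mem_cons_of_mem hi)),
      ih (fun i hi => hf i (Finset.mem_cons_of_mem hi))]

lemma sq_cpow (q : ℝ) (hq : 0 ≤ q) (t : ℂ) :
    (((q ^ 2 : ℝ)) : ℂ) ^ t = (q : ℂ) ^ (2 * t) := by
  rw [Complex.ofReal_pow, sq, Complex.mul_cpow_ofReal_nonneg hq hq,
    Complex.cpow_ofNat_mul, sq]

lemma norm_Q_cpow (t : ℂ) (h𝔫 : 𝔫 ≠ 0) (hI : I ⊆ S F (nOne F 𝔫)) :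
    ((Ideal.absNorm (idealDiv F 𝔫 (∏ w ∈ I, w ^ 2)) : ℂ)) ^ t =
      (Ideal.absNorm 𝔫 : ℂ) ^ t * ∏ v ∈ I, ((qv F v : ℂ) ^ (2 * t))⁻¹ := by
  have hspec := idealDiv_spec F (P_dvd F h𝔫 hI)
  have hP : ((Ideal.absNorm (∏ w ∈ I, w ^ 2) : ℕ) : ℂ) ^ t =
      ∏ v ∈ I, (qv F v : ℂ) ^ (2 * t) := by
    have hcast : ((Ideal.absNorm (∏ w ∈ I, w ^ 2) : ℕ) : ℂ) =
        ((∏ v ∈ I, ((Ideal.absNorm v : ℝ) ^ 2) : ℝ) : ℂ) := by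
      rw [map_prod]
      push_cast [map_pow]
      rfl
    rw [hcast, cpow_prod_aux I _ (fun i _ => by positivity) t]
    exact Finset.prod_congr rfl fun v _ => sq_cpow (Ideal.absNorm v : ℝ) (by positivity) t
  have hPne : (∏ v ∈ I, (qv F v : ℂ) ^ (2 * t)) ≠ 0 := by
    apply Finset.prod_ne_zero_iff.mpr
    intro v hv
    intro hc
    rcases (Complex.cpow_eq_zero_iff _ _).mp hc with ⟨hc0, -⟩
    have := two_le_qv F (S_nOne_subset F (hI hv))
    rw [Complex.ofReal_eq_zero] at hc0
    linarith
  have hmul : (Ideal.absNorm 𝔫 : ℂ) ^ t =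
      (∏ v ∈ I, (qv F v : ℂ) ^ (2 * t)) *
        ((Ideal.absNorm (idealDiv F 𝔫 (∏ w ∈ I, w ^ 2)) : ℂ)) ^ t := by
    rw [← hP]
    have : ((Ideal.absNorm 𝔫 : ℕ) : ℂ) =
        ((Ideal.absNorm (∏ w ∈ I, w ^ 2) : ℝ) : ℂ) *
          ((Ideal.absNorm (idealDiv F 𝔫 (∏ w ∈ I, w ^ 2)) : ℝ) : ℂ) := by
      conv_lhs => rw [hspec]
      push_cast [map_mul]
      ring
    rw [this, Complex.mul_cpow_ofReal_nonneg (by positivity) (by positivity)]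
    norm_cast
  rw [hmul]
  rw [Finset.prod_inv_distrib, mul_comm (∏ v ∈ I, (qv F v : ℂ) ^ (2 * t)), mul_assoc,
    mul_inv_cancel₀ hPne, mul_one]
end Setup2

noncomputable def cfac (t : ℂ) (𝔫 v : Ideal (𝓞 F)) : ℂ :=
  if ordv F v 𝔫 = 2 then -((1 - (qv F v : ℂ)⁻¹)⁻¹ * (qv F v : ℂ) ^ (-2 * (1 + t)))
  else -((qv F v : ℂ) ^ (-2 * (1 + t)))

section PerV
variable {𝔫 v : Ideal (𝓞 F)} (t : ℂ)

lemma cpow_split (hq : 2 ≤ qv F v) :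
    (qv F v : ℂ) ^ (-2 * (1 + t)) =
      (((qv F v : ℂ)) ^ 2)⁻¹ * ((qv F v : ℂ) ^ (2 * t))⁻¹ := by
  have hq0 : (qv F v : ℂ) ≠ 0 := by
    rw [Complex.ofReal_ne_zero]; linarith
  have h : (-2 * (1 + t) : ℂ) = (-(2 : ℂ)) + (-(2 * t)) := by ring
  rw [h, Complex.cpow_add _ _ hq0, Complex.cpow_neg, Complex.cpow_neg, Complex.cpow_ofNat]

lemma per_v (h𝔫 : 𝔫 ≠ 0) (hvS : v ∈ S F 𝔫) (h2 : 2 ≤ ordv F v 𝔫) :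
    (-1 : ℂ) * (if ordv F v (nOne F 𝔫) = 1 then (omegav F v (nZero F 𝔫) : ℂ) else 1) *
      (((if ordv F v 𝔫 = 2 then 1 else (1 + qv F v) * qv F v ^ (ordv F v 𝔫 - 3)) /
        ((1 + qv F v) * qv F v ^ (ordv F v 𝔫 - 1)) : ℝ) : ℂ) *
      ((qv F v : ℂ) ^ (2 * t))⁻¹ = cfac F t 𝔫 v := by
  have hq : 2 ≤ qv F v := two_le_qv F hvS
  have hq0 : (qv F v : ℂ) ≠ 0 := by rw [Complex.ofReal_ne_zero]; linarith
  have hq1 : (qv F v : ℂ) - 1 ≠ 0 := by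
    intro hc
    have : (qv F v : ℂ) = ((1 : ℝ) : ℂ) := by push_cast; linear_combination hc
    have := Complex.ofReal_injective this
    linarith
  have hq1' : 1 + (qv F v : ℂ) ≠ 0 := by
    intro hc
    have : ((1 + qv F v : ℝ) : ℂ) = ((0 : ℝ) : ℂ) := by push_cast; linear_combination hc
    have := Complex.ofReal_injective this
    linarith
  have hqR : (qv F v : ℝ) ≠ 1 := by linarith
  have hqinv : 1 - (qv F v : ℂ)⁻¹ ≠ 0 := by
    rw [sub_ne_zero]
    intro hc
    rw [eq_comm, inv_eq_one] at hc
    exact hqR (by exact_mod_cast hc)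
  have hord1 : ordv F v (nOne F 𝔫) = ordv F v 𝔫 / 2 := by
    rw [ordv_nOne, if_pos hvS]
  have hmemZ : v ∈ S F (nZero F 𝔫) ↔ ordv F v 𝔫 % 2 = 1 := by
    rw [mem_S_nZero]; exact ⟨fun h => h.2, fun h => ⟨hvS, h⟩⟩
  rcases Nat.lt_or_ge (ordv F v 𝔫) 4 with h4 | h4
  · interval_cases he : ordv F v 𝔫
    · -- e = 2
      simp only [hord1, he, omegav, hmemZ, cfac, cpow_split F t hq]
      norm_num
      generalize ((qv F v : ℂ) ^ (2 * t))⁻¹ = X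
      push_cast
      field_simp
      try ring
    · -- e = 3
      simp only [hord1, he, omegav, hmemZ, cfac, cpow_split F t hq]
      norm_num
      generalize ((qv F v : ℂ) ^ (2 * t))⁻¹ = X
      push_cast
      field_simp
      try ring
      simp
  · -- e >= 4
    have hne1 : ordv F v 𝔫 / 2 ≠ 1 := by omega
    have hne2 : ordv F v 𝔫 ≠ 2 := by omega
    have he3 : ordv F v 𝔫 - 1 = ordv F v 𝔫 - 3 + 2 := by omega
    rw [hord1, if_neg hne1, cfac, if_neg hne2, cpow_split F t hq,
      if_neg hne2, he3, pow_add]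
    have hpne : (qv F v : ℂ) ^ (ordv F v 𝔫 - 3) ≠ 0 := pow_ne_zero _ hq0
    generalize ((qv F v : ℂ) ^ (2 * t))⁻¹ = X
    push_cast
    field_simp
    try ring
end PerV
section Summand
variable {𝔫 : Ideal (𝓞 F)} {I : Finset (Ideal (𝓞 F))}

lemma summand_eq (t : ℂ) (h𝔫 : 𝔫 ≠ 0) (hI : I ⊆ S F (nOne F 𝔫)) :
    (-1 : ℂ) ^ I.card *
      (∏ v ∈ I ∩ Sk F 1 (nOne F 𝔫), (omegav F v (nZero F 𝔫) : ℂ)) *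
      ((iota F (idealDiv F 𝔫 (∏ v ∈ I, v ^ 2)) / iota F 𝔫 : ℝ) : ℂ) *
      (Ideal.absNorm (idealDiv F 𝔫 (∏ v ∈ I, v ^ 2)) : ℂ) ^ t =
      (Ideal.absNorm 𝔫 : ℂ) ^ t * ∏ v ∈ I, cfac F t 𝔫 v := by
  have hinter : I ∩ Sk F 1 (nOne F 𝔫) =
      I.filter (fun v => ordv F v (nOne F 𝔫) = 1) := by
    ext v
    simp only [Finset.mem_inter, Finset.mem_filter, Sk]
    constructor
    · exact fun h => ⟨h.1, h.2.2⟩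
    · exact fun h => ⟨h.1, hI h.1, h.2⟩
  rw [hinter, Finset.prod_filter, iota_ratio F h𝔫 hI, norm_Q_cpow F t h𝔫 hI,
    Complex.ofReal_prod, ← Finset.prod_const]
  rw [show ∀ A B C D E : ℂ, A * B * C * (E * D) = E * (A * B * C * D) from fun _ _ _ _ _ => by ring]
  congr 1
  rw [← Finset.prod_mul_distrib, ← Finset.prod_mul_distrib, ← Finset.prod_mul_distrib]
  apply Finset.prod_congr rfl
  intro v hv
  exact per_v F t h𝔫 (S_nOne_subset F (hI hv)) ((mem_S_nOne F).mp (hI hv)).2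
end Summand

theorem statement1
    (hF : ∀ v : NumberField.InfinitePlace F, v.IsReal)
    (t : ℂ) (𝔫 : Ideal (𝓞 F)) (h𝔫 : 𝔫 ≠ 0) :
    Ntrans F (fun 𝔪 => (Ideal.absNorm 𝔪 : ℂ) ^ t) 𝔫 =
      (Ideal.absNorm 𝔫 : ℂ) ^ t *
        (∏ v ∈ S F (nOne F 𝔫) \ Sk F 2 𝔫, (1 - (qv F v : ℂ) ^ (-2 * (1 + t)))) *
        (∏ v ∈ Sk F 2 𝔫, (1 - (1 - (qv F v : ℂ)⁻¹)⁻¹ * (qv F v : ℂ) ^ (-2 * (1 + t)))) := by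
  have hsub : Sk F 2 𝔫 ⊆ S F (nOne F 𝔫) := by
    intro v hv
    rw [Sk, Finset.mem_filter] at hv
    exact (mem_S_nOne F).mpr ⟨hv.1, by omega⟩
  simp only [Ntrans]
  rw [Finset.sum_congr rfl (fun I hI => by
    rw [summand_eq F t h𝔫 (Finset.mem_powerset.mp hI),
      show ((∏ v ∈ I, cfac F t 𝔫 v : ℂ)) =
        (∏ v ∈ I, cfac F t 𝔫 v) * ∏ v ∈ S F (nOne F 𝔫) \ I, (1 : ℂ) by
          rw [Finset.prod_const_one, mul_one]])]
  rw [← Finset.mul_sum, ← Finset.prod_add, ← Finset.prod_sdiff hsub, ← mul_assoc]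
  congr 1
  · congr 1
    apply Finset.prod_congr rfl
    intro v hv
    rw [Finset.mem_sdiff] at hv
    have hvS : v ∈ S F 𝔫 := S_nOne_subset F hv.1
    have hne2 : ordv F v 𝔫 ≠ 2 := by
      intro hc
      exact hv.2 (by rw [Sk, Finset.mem_filter]; exact ⟨hvS, hc⟩)
    rw [cfac, if_neg hne2]
    ring
  · apply Finset.prod_congr rfl
    intro v hv
    rw [Sk, Finset.mem_filter] at hv
    rw [cfac, if_pos hv.2]
    ring
end Stmt1
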